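/- Composite Euler–Maclaurin quadrature of level m: let r ≥ 1, f ∈ C^r[a,b], m, n ∈ ℕ, x_j = a + jh with h = (b-a)/n. Then ∫_a^b f(t) dt = ∑_{j=0}^{n-1} ∑_{k=1}^r ((-1)^{k+1}/(m! k!)) h^k (f^{(k-1)}(x_{j+1}) B_k^{[m-1]}(1) - f^{(k-1)}(x_j) B_k^{[m-1]}) + ((-h)^r/(m! r!)) ∫_a^b f^{(r)}(t) B_r^{[m-1]}((t-a)/h - ⌊(t-a)/h⌋) dt. -/

import Mathlib

open scoped Nat Real

/-- The partial sum `∑_{l=0}^{m-1} z^l / l!` of the exponential series. -/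
noncomputable def expPartialSum (m : ℕ) : PowerSeries ℝ :=
  ∑ l ∈ Finset.range m, PowerSeries.C ((1 : ℝ) / l !) * PowerSeries.X ^ l

/-- `B : ℕ → ℝ → ℝ` is the family of generalized Bernoulli polynomials of level `m`,
i.e. `z^m e^{xz} / (e^z - ∑_{l=0}^{m-1} z^l/l!) = ∑ B n x * z^n / n!`, stated
multiplicatively. -/
noncomputable def IsGenBernoulli (m : ℕ) (B : ℕ → ℝ → ℝ) : Prop :=
  ∀ x : ℝ,
    (PowerSeries.exp ℝ - expPartialSum m) * PowerSeries.mk (fun n => B n x / n !) =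
      PowerSeries.X ^ m * PowerSeries.mk (fun n => x ^ n / n !)

lemma coeff_expPartialSum (m k : ℕ) :
    PowerSeries.coeff k (expPartialSum m) = if k < m then (1 : ℝ) / k ! else 0 := by
  rw [expPartialSum, map_sum]
  simp only [PowerSeries.coeff_C_mul, PowerSeries.coeff_X_pow, mul_ite, mul_one, mul_zero]
  rw [Finset.sum_ite_eq (Finset.range m) k (fun l => (1:ℝ)/ l !)]
  simp [Finset.mem_range]

lemma gb_recur (m : ℕ) (B : ℕ → ℝ → ℝ) (hB : IsGenBernoulli m B) (s : ℕ) (x : ℝ) :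
    ∑ j ∈ Finset.range (s + 1), B j x / (j ! * (s + m - j)!) = x ^ s / s ! := by
  have h := congrArg (PowerSeries.coeff (m + s)) (hB x)
  rw [PowerSeries.coeff_mul, show m + s = s + m from add_comm m s,
    PowerSeries.coeff_X_pow_mul, ← Finset.Nat.sum_antidiagonal_swap,
    Finset.Nat.sum_antidiagonal_eq_sum_range_succ_mk] at h
  simp only [Prod.swap_prod_mk, ] at h
  simp only [map_sub, PowerSeries.coeff_exp, coeff_expPartialSum, PowerSeries.coeff_mk] at h
  rw [← h, eq_comm]
  rw [← Finset.sum_subset (Finset.range_subset_range.2 (by omega : s + 1 ≤ s + m + 1))]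
  · apply Finset.sum_congr rfl
    intro j hj
    rw [Finset.mem_range] at hj
    have h1 : ¬ (s + m - j < m) := by omega
    rw [if_neg h1]
    have : (algebraMap ℚ ℝ) (1 / (s + m - j)! : ℚ) = (1 : ℝ) / (s + m - j)! := by
      push_cast [map_div₀]; simp
    rw [this]
    ring
  · intro j hj hj'
    rw [Finset.mem_range] at hj hj'
    have h1 : s + m - j < m := by omega
    rw [if_pos h1]
    have : (algebraMap ℚ ℝ) (1 / (s + m - j)! : ℚ) = (1 : ℝ) / (s + m - j)! := by
      push_cast [map_div₀]; simp
    rw [this]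
    ring

lemma gb_eq (m : ℕ) (B : ℕ → ℝ → ℝ) (hB : IsGenBernoulli m B) (s : ℕ) (x : ℝ) :
    B s x = m ! * x ^ s - m ! * s ! * ∑ j ∈ Finset.range s, B j x / (j ! * (s + m - j)!) := by
  have h := gb_recur m B hB s x
  rw [Finset.sum_range_succ] at h
  have hs : (s ! : ℝ) ≠ 0 := Nat.cast_ne_zero.2 (Nat.factorial_ne_zero s)
  have hm : (m ! : ℝ) ≠ 0 := Nat.cast_ne_zero.2 (Nat.factorial_ne_zero m)
  have hsm : s + m - s = m := by omega
  rw [hsm] at h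
  have h1 : ((s ! : ℝ) * m !) * (B s x / (s ! * m !)) = B s x := by field_simp
  have h2 : (s ! : ℝ) * (x ^ s / s !) = x ^ s := by field_simp
  linear_combination ((s ! : ℝ) * m !) * h - h1 + (m ! : ℝ) * h2

lemma gb_zero (m : ℕ) (B : ℕ → ℝ → ℝ) (hB : IsGenBernoulli m B) (x : ℝ) :
    B 0 x = m ! := by
  simpa using gb_eq m B hB 0 x

lemma gb_hasDerivAt (m : ℕ) (B : ℕ → ℝ → ℝ) (hB : IsGenBernoulli m B) :
    ∀ (s : ℕ) (x : ℝ), HasDerivAt (fun y => B s y) (s * B (s - 1) x) x := by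
  intro s
  induction s using Nat.strong_induction_on with
  | _ s IH =>
    match s with
    | 0 =>
      intro x
      have : (fun y => B 0 y) = fun _ : ℝ => (m ! : ℝ) := funext fun y => gb_zero m B hB y
      rw [this]
      simpa using hasDerivAt_const x (m ! : ℝ)
    | (s + 1) =>
      intro x
      have funeq : (fun y => B (s + 1) y) = fun y =>
          (m ! : ℝ) * y ^ (s + 1) - m ! * (s + 1)! *
            ∑ j ∈ Finset.range (s + 1), B j y / (j ! * (s + 1 + m - j)!) :=
        funext fun y => gb_eq m B hB (s + 1) y
      rw [funeq]
      have hd : HasDerivAt (fun y =>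
          (m ! : ℝ) * y ^ (s + 1) - m ! * (s + 1)! *
            ∑ j ∈ Finset.range (s + 1), B j y / (j ! * (s + 1 + m - j)!))
          ((m ! : ℝ) * ((s + 1) * x ^ s) - m ! * (s + 1)! *
            ∑ j ∈ Finset.range (s + 1), (j * B (j - 1) x) / (j ! * (s + 1 + m - j)!)) x := by
        apply HasDerivAt.sub
        · simpa using (hasDerivAt_pow (s + 1) x).const_mul (m ! : ℝ)
        · apply HasDerivAt.const_mul
          apply HasDerivAt.fun_sum
          intro j hj
          rw [Finset.mem_range] at hj
          exact (IH j (by omega) x).div_const _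
      convert hd using 1
      have hsum : ∑ j ∈ Finset.range (s + 1), (↑j * B (j - 1) x) / (j ! * (s + 1 + m - j)!)
          = ∑ i ∈ Finset.range s, B i x / (i ! * (s + m - i)!) := by
        rw [Finset.sum_range_succ']
        simp only [Nat.cast_zero, zero_mul, zero_div, add_zero]
        apply Finset.sum_congr rfl
        intro i hi
        have h1 : s + 1 + m - (i + 1) = s + m - i := by omega
        rw [h1, Nat.factorial_succ]
        have hifac : (i ! : ℝ) ≠ 0 := Nat.cast_ne_zero.2 (Nat.factorial_ne_zero i)
        have h2 : ((s + m - i)! : ℝ) ≠ 0 := Nat.cast_ne_zero.2 (Nat.factorial_ne_zero _)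
        push_cast
        field_simp
      rw [hsum]
      simp only [Nat.add_sub_cancel]
      rw [gb_eq m B hB s x]
      have : ((s + 1)! : ℝ) = (s + 1) * s ! := by push_cast [Nat.factorial_succ]; ring
      rw [this]
      push_cast
      ring

lemma gb_cont (m : ℕ) (B : ℕ → ℝ → ℝ) (hB : IsGenBernoulli m B) (j : ℕ) :
    Continuous (fun y => B j y) := by
  have hd : Differentiable ℝ (fun y => B j y) :=
    fun y => (gb_hasDerivAt m B hB j y).differentiableAt
  exact hd.continuous

lemma gb_ibp (m : ℕ) (B : ℕ → ℝ → ℝ) (hB : IsGenBernoulli m B)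
    {a b : ℝ} {f : ℝ → ℝ} {R : ℕ} (hab : a < b) (hf : ContDiffOn ℝ R f (Set.Icc a b))
    {h : ℝ} (hh : 0 < h) {c : ℝ} (hc1 : a ≤ c) (hc2 : c + h ≤ b)
    {k : ℕ} (hk : k < R) :
    ∫ t in c..(c + h), iteratedDerivWithin k f (Set.Icc a b) t * B k ((t - c) / h) =
      iteratedDerivWithin k f (Set.Icc a b) (c + h) * (h / (k + 1) * B (k + 1) 1)
      - iteratedDerivWithin k f (Set.Icc a b) c * (h / (k + 1) * B (k + 1) 0)
      - (h / (k + 1)) * ∫ t in c..(c + h),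
          iteratedDerivWithin (k + 1) f (Set.Icc a b) t * B (k + 1) ((t - c) / h) := by
  set F : ℕ → ℝ → ℝ := fun j => iteratedDerivWithin j f (Set.Icc a b) with hF
  have hcc : c ≤ c + h := by linarith
  have hsub : Set.Icc c (c + h) ⊆ Set.Icc a b := Set.Icc_subset_Icc hc1 hc2
  have hUD : UniqueDiffOn ℝ (Set.Icc a b) := uniqueDiffOn_Icc hab
  have hk1 : ((k : ℝ) + 1) ≠ 0 := by positivity
  have hh' : h ≠ 0 := ne_of_gt hh
  have contφ : ∀ j, Continuous fun t => B j ((t - c) / h) :=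
    fun j => (gb_cont m B hB j).comp ((continuous_id.sub continuous_const).div_const h)
  have contF : ∀ j, j ≤ R → ContinuousOn (F j) (Set.Icc a b) := fun j hj =>
    hf.continuousOn_iteratedDerivWithin (by exact_mod_cast hj) hUD
  set v : ℝ → ℝ := fun t => h / (k + 1) * B (k + 1) ((t - c) / h) with hv
  set g : ℝ → ℝ := fun t => F k t * v t with hg
  set g' : ℝ → ℝ := fun t =>
    h / (k + 1) * (F (k + 1) t * B (k + 1) ((t - c) / h)) + F k t * B k ((t - c) / h) with hg'
  have contv : Continuous v := continuous_const.mul (contφ (k + 1))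
  have hcontg : ContinuousOn g (Set.Icc c (c + h)) :=
    ((contF k hk.le).mono hsub).mul contv.continuousOn
  have hintg' : IntervalIntegrable g' MeasureTheory.volume c (c + h) := by
    apply ContinuousOn.intervalIntegrable
    rw [Set.uIcc_of_le hcc]
    exact (continuousOn_const.mul (((contF (k + 1) hk).mono hsub).mul
      (contφ (k + 1)).continuousOn)).add (((contF k hk.le).mono hsub).mul
      (contφ k).continuousOn)
  have hderiv : ∀ x ∈ Set.Ioo c (c + h), HasDerivAt g (g' x) x := by
    intro x hx
    have hax : a < x := lt_of_le_of_lt hc1 hx.1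
    have hxb : x < b := lt_of_lt_of_le hx.2 hc2
    have hmem : x ∈ Set.Icc a b := ⟨hax.le, hxb.le⟩
    have hFd : HasDerivAt (F k) (F (k + 1) x) x := by
      have hdiff := (hf.differentiableOn_iteratedDerivWithin
        (by exact_mod_cast hk) hUD) x hmem
      have hd2 := hdiff.hasDerivWithinAt
      rw [← iteratedDerivWithin_succ] at hd2
      exact hd2.hasDerivAt (Icc_mem_nhds hax hxb)
    have hinner : HasDerivAt (fun t : ℝ => (t - c) / h) (1 / h) x := by
      simpa using ((hasDerivAt_id x).sub_const c).div_const h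
    have houter := gb_hasDerivAt m B hB (k + 1) ((x - c) / h)
    have hcomp := HasDerivAt.comp x houter hinner
    have hvd : HasDerivAt v (B k ((x - c) / h)) x := by
      have := hcomp.const_mul (h / ((k : ℝ) + 1))
      refine this.congr_deriv ?_
      · simp only [Nat.add_sub_cancel]
        push_cast
        field_simp
    have := hFd.mul hvd
    refine this.congr_deriv ?_
    simp only [hg', hv]
    ring
  have key := intervalIntegral.integral_eq_sub_of_hasDerivAt_of_le hcc hcontg hderiv hintg'
  have hsplit : ∫ t in c..(c + h), g' t =
      (h / (k + 1)) * (∫ t in c..(c + h), F (k + 1) t * B (k + 1) ((t - c) / h))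
      + ∫ t in c..(c + h), F k t * B k ((t - c) / h) := by
    rw [← intervalIntegral.integral_const_mul]
    apply intervalIntegral.integral_add
    · apply ContinuousOn.intervalIntegrable
      rw [Set.uIcc_of_le hcc]
      exact continuousOn_const.mul (((contF (k + 1) hk).mono hsub).mul
        (contφ (k + 1)).continuousOn)
    · apply ContinuousOn.intervalIntegrable
      rw [Set.uIcc_of_le hcc]
      exact ((contF k hk.le).mono hsub).mul (contφ k).continuousOn
  rw [hsplit] at key
  have e1 : (c + h - c) / h = 1 := by field_simp; ring
  have e0 : (c - c) / h = 0 := by simp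
  simp only [hg, hv, e1, e0] at key
  linarith [key]

lemma gb_single (m : ℕ) (B : ℕ → ℝ → ℝ) (hB : IsGenBernoulli m B)
    {a b : ℝ} {f : ℝ → ℝ} {R : ℕ} (hab : a < b) (hf : ContDiffOn ℝ R f (Set.Icc a b))
    {h : ℝ} (hh : 0 < h) {c : ℝ} (hc1 : a ≤ c) (hc2 : c + h ≤ b) :
    ∀ r', 1 ≤ r' → r' ≤ R →
    ∫ t in c..(c + h), f t =
      (∑ k ∈ Finset.Icc 1 r', ((-1 : ℝ) ^ (k + 1) / ((m ! : ℝ) * (k ! : ℝ))) * h ^ k *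
        (iteratedDerivWithin (k - 1) f (Set.Icc a b) (c + h) * B k 1 -
         iteratedDerivWithin (k - 1) f (Set.Icc a b) c * B k 0)) +
      ((-1 : ℝ) ^ r' * h ^ r' / ((m ! : ℝ) * (r' ! : ℝ))) *
        ∫ t in c..(c + h), iteratedDerivWithin r' f (Set.Icc a b) t * B r' ((t - c) / h) := by
  intro r' hr1 hrR
  revert hrR
  induction r', hr1 using Nat.le_induction with
  | base =>
    intro hrR
    have hm : (m ! : ℝ) ≠ 0 := Nat.cast_ne_zero.2 (Nat.factorial_ne_zero m)
    have step1 : (∫ t in c..(c + h), f t) =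
        ∫ t in c..(c + h), (1 / (m ! : ℝ)) *
          (iteratedDerivWithin 0 f (Set.Icc a b) t * B 0 ((t - c) / h)) := by
      apply intervalIntegral.integral_congr
      intro t _
      simp only [gb_zero m B hB, iteratedDerivWithin_zero]
      field_simp
    rw [step1, intervalIntegral.integral_const_mul,
      gb_ibp m B hB hab hf hh hc1 hc2 (by omega : 0 < R)]
    simp only [Finset.Icc_self, Finset.sum_singleton, Nat.factorial_one, pow_one]
    push_cast
    field_simp
    ring
  | succ r' hr1' IH =>
    intro hrR
    rw [IH (by omega), gb_ibp m B hB hab hf hh hc1 hc2 (by omega : r' < R),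
      Finset.sum_Icc_succ_top (by omega : 1 ≤ r' + 1)]
    have hm : (m ! : ℝ) ≠ 0 := Nat.cast_ne_zero.2 (Nat.factorial_ne_zero m)
    have hrf : (r' ! : ℝ) ≠ 0 := Nat.cast_ne_zero.2 (Nat.factorial_ne_zero r')
    simp only [Nat.add_sub_cancel, Nat.factorial_succ]
    push_cast
    field_simp
    ring

theorem stmt_18 (m : ℕ) (hm : 0 < m) (B : ℕ → ℝ → ℝ) (hB : IsGenBernoulli m B)
    (r : ℕ) (hr : 1 ≤ r) (a b : ℝ) (hab : a ≤ b) (f : ℝ → ℝ)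
    (hf : ContDiffOn ℝ r f (Set.Icc a b)) (n : ℕ) (hn : 1 ≤ n) :
    ∫ t in a..b, f t =
      (∑ j ∈ Finset.range n, ∑ k ∈ Finset.Icc 1 r,
        ((-1 : ℝ) ^ (k + 1) / ((m ! : ℝ) * (k ! : ℝ))) * ((b - a) / n) ^ k *
          (iteratedDerivWithin (k - 1) f (Set.Icc a b) (a + (j + 1) * ((b - a) / n)) *
              B k 1 -
            iteratedDerivWithin (k - 1) f (Set.Icc a b) (a + j * ((b - a) / n)) *
              B k 0)) +
      ((-(b - a) / n) ^ r / ((m ! : ℝ) * (r ! : ℝ))) *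
        ∫ t in a..b, iteratedDerivWithin r f (Set.Icc a b) t *
          B r ((t - a) / ((b - a) / n) - (⌊(t - a) / ((b - a) / n)⌋ : ℝ)) := by
  rcases eq_or_lt_of_le hab with rfl | hab'
  · rw [eq_comm, intervalIntegral.integral_same]
    rw [Finset.sum_eq_zero, sub_self, neg_zero, zero_div, zero_pow (by omega : r ≠ 0)]
    · simp
    · intro j _
      apply Finset.sum_eq_zero
      intro k hk
      rw [Finset.mem_Icc] at hk
      rw [sub_self, zero_div, zero_pow (by omega : k ≠ 0)]
      ring
  · -- main case
    have hn' : (n : ℝ) ≠ 0 := Nat.cast_ne_zero.2 (by omega)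
    set h : ℝ := (b - a) / n with hdefh
    have hh : 0 < h := div_pos (by linarith) (Nat.cast_pos.2 (by omega))
    set c : ℕ → ℝ := fun j => a + j * h with hdefc
    have hc0 : c 0 = a := by simp [hdefc]
    have hcn : c n = b := by
      simp only [hdefc, hdefh]
      field_simp
      ring
    have hcsucc : ∀ j : ℕ, c (j + 1) = c j + h := by
      intro j; simp only [hdefc]; push_cast; ring
    have hc1 : ∀ j : ℕ, a ≤ c j := by
      intro j; simp only [hdefc]
      have : 0 ≤ (j : ℝ) * h := by positivity
      linarith
    have hc2 : ∀ j : ℕ, j < n → c j + h ≤ b := by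
      intro j hj
      rw [← hcsucc, ← hcn]
      simp only [hdefc]
      have : ((j : ℝ) + 1) ≤ (n : ℝ) := by exact_mod_cast hj
      push_cast
      nlinarith [hh]
    have hcmono : ∀ j : ℕ, c j ≤ c (j + 1) := by
      intro j; rw [hcsucc]; linarith
    have hsubj : ∀ j : ℕ, j < n → Set.uIcc (c j) (c (j + 1)) ⊆ Set.Icc a b := by
      intro j hj
      rw [Set.uIcc_of_le (hcmono j)]
      exact Set.Icc_subset_Icc (hc1 j) (by rw [hcsucc]; exact hc2 j hj)
    have hUD : UniqueDiffOn ℝ (Set.Icc a b) := uniqueDiffOn_Icc hab'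
    have contFr : ContinuousOn (iteratedDerivWithin r f (Set.Icc a b)) (Set.Icc a b) :=
      hf.continuousOn_iteratedDerivWithin le_rfl hUD
    set G : ℝ → ℝ := fun t => iteratedDerivWithin r f (Set.Icc a b) t *
      B r ((t - a) / h - (⌊(t - a) / h⌋ : ℝ)) with hdefG
    set Gj : ℕ → ℝ → ℝ := fun j t => iteratedDerivWithin r f (Set.Icc a b) t *
      B r ((t - c j) / h) with hdefGj
    have contGj : ∀ j : ℕ, j < n → ContinuousOn (Gj j) (Set.uIcc (c j) (c (j + 1))) := by
      intro j hj
      exact (contFr.mono (hsubj j hj)).mul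
        ((gb_cont m B hB r).comp
          ((continuous_id.sub continuous_const).div_const h)).continuousOn
    -- pointwise equality on the open subinterval
    have hpt : ∀ j : ℕ, j < n → ∀ t ∈ Set.Ioo (c j) (c (j + 1)), G t = Gj j t := by
      intro j hj t ht
      simp only [hdefG, hdefGj]
      congr 2
      have h1 : (j : ℝ) < (t - a) / h := by
        rw [lt_div_iff₀ hh]
        have := ht.1
        simp only [hdefc] at this
        linarith
      have h2 : (t - a) / h < (j : ℝ) + 1 := by
        rw [div_lt_iff₀ hh]
        have := ht.2
        simp only [hdefc] at this
        push_cast at this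
        linarith
      have hfl : ⌊(t - a) / h⌋ = (j : ℤ) := by
        rw [Int.floor_eq_iff]
        constructor
        · exact_mod_cast h1.le
        · exact_mod_cast h2
      rw [hfl]
      push_cast
      simp only [hdefc]
      field_simp
      ring
    have hae : ∀ j : ℕ, j < n → ∀ᵐ t ∂(MeasureTheory.volume : MeasureTheory.Measure ℝ),
        t ∈ Set.uIoc (c j) (c (j + 1)) → G t = Gj j t := by
      intro j hj
      rw [MeasureTheory.ae_iff]
      refine MeasureTheory.measure_mono_null (fun t ht => ?_)
        (MeasureTheory.measure_singleton (c (j + 1)))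
      · 
        simp only [Set.mem_setOf_eq, Classical.not_imp] at ht
        obtain ⟨htmem, hne⟩ := ht
        rw [Set.uIoc_of_le (hcmono j)] at htmem
        simp only [Set.mem_singleton_iff]
        by_contra hne2
        exact hne (hpt j hj t ⟨htmem.1, lt_of_le_of_ne htmem.2 hne2⟩)
    have haeR : ∀ j : ℕ, j < n →
        Gj j =ᵐ[MeasureTheory.volume.restrict (Set.uIoc (c j) (c (j + 1)))] G := by
      intro j hj
      exact (MeasureTheory.ae_restrict_iff' measurableSet_uIoc).2
        ((hae j hj).mono fun t h1 h2 => (h1 h2).symm)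
    have hintG : ∀ j : ℕ, j < n →
        IntervalIntegrable G MeasureTheory.volume (c j) (c (j + 1)) := by
      intro j hj
      exact ((contGj j hj).intervalIntegrable).congr_ae (haeR j hj)
    have hIeq : ∀ j : ℕ, j < n →
        (∫ t in (c j)..(c (j + 1)), G t) = ∫ t in (c j)..(c (j + 1)), Gj j t :=
      fun j hj => (intervalIntegral.integral_congr_ae
        ((hae j hj).mono fun t h1 h2 => (h1 h2).symm)).symm
    have hintf : ∀ j : ℕ, j < n →
        IntervalIntegrable f MeasureTheory.volume (c j) (c (j + 1)) := by
      intro j hj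
      exact (hf.continuousOn.mono (hsubj j hj)).intervalIntegrable
    have hsumf : ∫ t in a..b, f t = ∑ j ∈ Finset.range n, ∫ t in (c j)..(c (j + 1)), f t := by
      rw [intervalIntegral.sum_integral_adjacent_intervals hintf, hc0, hcn]
    have hsumG : ∫ t in a..b, G t = ∑ j ∈ Finset.range n, ∫ t in (c j)..(c (j + 1)), G t := by
      rw [intervalIntegral.sum_integral_adjacent_intervals hintG, hc0, hcn]
    have hper : ∀ j ∈ Finset.range n,
        (∫ t in (c j)..(c (j + 1)), f t) =
        (∑ k ∈ Finset.Icc 1 r, ((-1 : ℝ) ^ (k + 1) / ((m ! : ℝ) * (k ! : ℝ))) * h ^ k *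
          (iteratedDerivWithin (k - 1) f (Set.Icc a b) (a + ((j : ℝ) + 1) * h) * B k 1 -
           iteratedDerivWithin (k - 1) f (Set.Icc a b) (a + (j : ℝ) * h) * B k 0)) +
        ((-1 : ℝ) ^ r * h ^ r / ((m ! : ℝ) * (r ! : ℝ))) *
          ∫ t in (c j)..(c (j + 1)), Gj j t := by
      intro j hj
      rw [Finset.mem_range] at hj
      have key := gb_single m B hB hab' hf hh (hc1 j) (hc2 j hj) r hr le_rfl
      rw [hcsucc j, key]
      congr 1
      · apply Finset.sum_congr rfl
        intro k _
        have e1 : c j + h = a + ((j : ℝ) + 1) * h := by simp only [hdefc]; ring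
        have e2 : c j = a + (j : ℝ) * h := rfl
        rw [e1, e2]
    have hGsum : ∑ j ∈ Finset.range n, (∫ t in (c j)..(c (j + 1)), Gj j t)
        = ∫ t in a..b, G t := by
      rw [hsumG]
      exact Finset.sum_congr rfl fun j hj => (hIeq j (Finset.mem_range.1 hj)).symm
    rw [hsumf, Finset.sum_congr rfl hper, Finset.sum_add_distrib, ← Finset.mul_sum, hGsum]
    congr 1
    have hneg : (-(b - a) / (n : ℝ)) ^ r = (-1 : ℝ) ^ r * h ^ r := by
      rw [hdefh, neg_div, neg_pow]
    rw [hneg]
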